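/- arXiv:2203.04184 — 2 statements merged into one kernel-verified Lean document; each statement's English description precedes it below -/
import Mathlib

section
/- Let φ = (√5 - 1)/2. Then Li_2(φ^2) = π^2/15 - (ln φ)^2, where Li_2(x) = ∑_{n=1}^∞ x^n/n^2. -/
open Real Finset

noncomputable def H (n : ℕ) : ℝ := ∑ k ∈ Finset.range n, 1 / ((k : ℝ) + 1)

noncomputable def H2 (n : ℕ) : ℝ := ∑ k ∈ Finset.range n, 1 / ((k : ℝ) + 1) ^ 2

noncomputable def zeta11 (n : ℕ) : ℝ :=
  ∑ k ∈ Finset.range n, ∑ j ∈ Finset.range k, 1 / (((k : ℝ) + 1) * ((j : ℝ) + 1))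

noncomputable def Li (m : ℕ) (x : ℝ) : ℝ := ∑' n : ℕ, x ^ (n + 1) / ((n : ℝ) + 1) ^ m

noncomputable def Li21 (x : ℝ) : ℝ := ∑' n : ℕ, x ^ (n + 1) * H n / ((n : ℝ) + 1) ^ 2

noncomputable def Li31 (x : ℝ) : ℝ := ∑' n : ℕ, x ^ (n + 1) * H n / ((n : ℝ) + 1) ^ 3

noncomputable def zeta3 : ℝ := ∑' n : ℕ, 1 / ((n : ℝ) + 1) ^ 3

noncomputable def zeta31 : ℝ := ∑' n : ℕ, H n / ((n : ℝ) + 1) ^ 3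

lemma sum_sq : Summable (fun n : ℕ => 1 / ((n : ℝ) + 1) ^ 2) := by
  have := (summable_nat_add_iff (f := fun n : ℕ => 1 / (n : ℝ) ^ 2) 1).2
    (Real.summable_one_div_nat_pow.2 one_lt_two)
  simpa using this

lemma summable_L2 {x : ℝ} (hx : |x| ≤ 1) :
    Summable (fun n : ℕ => x ^ (n + 1) / ((n : ℝ) + 1) ^ 2) := by
  refine Summable.of_norm_bounded sum_sq (fun n => ?_)
  have h1 : (0:ℝ) < ((n : ℝ) + 1) ^ 2 := by positivity
  rw [norm_eq_abs, abs_div, abs_pow, abs_of_pos h1]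
  gcongr
  exact pow_le_one₀ (abs_nonneg x) hx

lemma hasSum_L2 {x : ℝ} (hx : |x| ≤ 1) :
    HasSum (fun n : ℕ => x ^ (n + 1) / ((n : ℝ) + 1) ^ 2) (Li 2 x) :=
  (summable_L2 hx).hasSum

lemma L2_zero : Li 2 0 = 0 := by simp [Li]

lemma L2_one : Li 2 1 = π ^ 2 / 6 := by
  have h := hasSum_zeta_two
  have h2 := (hasSum_nat_add_iff (f := fun n : ℕ => (1:ℝ) / (n : ℝ) ^ 2) 1).2 (by simpa using h)
  have h3 : HasSum (fun n : ℕ => (1:ℝ) ^ (n+1) / ((n : ℝ) + 1) ^ 2) (π ^ 2 / 6) := by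
    refine h2.congr_fun fun n => ?_
    push_cast
    ring
  exact h3.tsum_eq

lemma L2_continuousOn : ContinuousOn (Li 2) (Set.Icc (-1 : ℝ) 1) := by
  have : ContinuousOn (fun x : ℝ => ∑' n : ℕ, x ^ (n + 1) / ((n : ℝ) + 1) ^ 2)
      (Set.Icc (-1 : ℝ) 1) := by
    refine continuousOn_tsum (fun i => (Continuous.continuousOn (by continuity))) sum_sq ?_
    intro n x hx
    have hx1 : |x| ≤ 1 := abs_le.2 ⟨hx.1, hx.2⟩
    have h1 : (0:ℝ) < ((n : ℝ) + 1) ^ 2 := by positivity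
    rw [norm_eq_abs, abs_div, abs_pow, abs_of_pos h1]
    gcongr
    exact pow_le_one₀ (abs_nonneg x) hx1
  exact this

lemma hasDerivAt_L2 {x : ℝ} (hx : |x| < 1) :
    HasDerivAt (Li 2) (∑' n : ℕ, x ^ n / ((n : ℝ) + 1)) x := by
  set r : ℝ := (1 + |x|) / 2 with hr
  have hr0 : 0 ≤ r := by positivity
  have hxr : |x| < r := by rw [hr]; linarith
  have hr1 : r < 1 := by rw [hr]; linarith
  have hL : (Li 2 : ℝ → ℝ) = fun y => ∑' n : ℕ, y ^ (n + 1) / ((n : ℝ) + 1) ^ 2 := rfl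
  rw [hL]
  refine hasDerivAt_tsum_of_isPreconnected (u := fun n : ℕ => r ^ n)
    (summable_geometric_of_lt_one hr0 hr1)
    (isOpen_Ioo (a := -r) (b := r)) (isPreconnected_Ioo)
    (g' := fun n y => y ^ n / ((n : ℝ) + 1))
    (fun n y _ => ?_) (fun n y hy => ?_) (y₀ := 0) ?_ ?_ ?_
  · have h := (hasDerivAt_pow (n + 1) y).div_const (((n : ℝ) + 1) ^ 2)
    refine h.congr_deriv ?_
    push_cast
    field_simp
  · have hy1 : |y| ≤ r := le_of_lt (abs_lt.2 ⟨by linarith [hy.1], by linarith [hy.2]⟩)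
    rw [norm_eq_abs, abs_div, abs_pow, abs_of_pos (by positivity : (0:ℝ) < (n:ℝ)+1)]
    have h2 : |y| ^ n / ((n:ℝ)+1) ≤ |y| ^ n :=
      div_le_self (by positivity) (by linarith [Nat.cast_nonneg (α := ℝ) n])
    exact h2.trans (pow_le_pow_left₀ (abs_nonneg y) hy1 n)
  · constructor <;> [linarith [abs_nonneg x]; linarith [abs_nonneg x]]
  · simpa using summable_of_finite_support (by simp : (Function.support fun n : ℕ => (0:ℝ) ^ (n+1) / ((n:ℝ)+1)^2).Finite)
  · exact abs_lt.1 hxr |> fun h => ⟨h.1, h.2⟩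

lemma hasDerivAt_L2' {x : ℝ} (hx : |x| < 1) (hx0 : x ≠ 0) :
    HasDerivAt (Li 2) (-Real.log (1 - x) / x) x := by
  have h := hasDerivAt_L2 hx
  have hs : HasSum (fun n : ℕ => x ^ n / ((n : ℝ) + 1)) (-Real.log (1 - x) / x) := by
    have := (hasSum_pow_div_log_of_abs_lt_one hx).div_const x
    refine this.congr_fun fun n => ?_
    push_cast
    field_simp
    ring
  rwa [hs.tsum_eq] at h

lemma L2_contAt {x : ℝ} (hx : |x| < 1) : ContinuousAt (Li 2) x :=
  (hasDerivAt_L2 hx).continuousAt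

/-- constancy from zero derivative on an open interval -/
lemma const_of_deriv {f : ℝ → ℝ} {a b : ℝ} (h : ∀ x ∈ Set.Ioo a b, HasDerivAt f 0 x)
    {x y : ℝ} (hx : x ∈ Set.Ioo a b) (hy : y ∈ Set.Ioo a b) : f x = f y := by
  have key : ∀ u v : ℝ, u ∈ Set.Ioo a b → v ∈ Set.Ioo a b → u < v → f u = f v := by
    intro u v hu hv huv
    have hsub : Set.Icc u v ⊆ Set.Ioo a b := fun z hz =>
      ⟨lt_of_lt_of_le hu.1 hz.1, lt_of_le_of_lt hz.2 hv.2⟩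
    have hcont : ContinuousOn f (Set.Icc u v) := fun z hz =>
      ((h z (hsub hz)).continuousAt).continuousWithinAt
    have hderiv : ∀ z ∈ Set.Ioo u v, HasDerivAt f 0 z := fun z hz =>
      h z (hsub ⟨hz.1.le, hz.2.le⟩)
    obtain ⟨c, hc, hc2⟩ := exists_hasDerivAt_eq_slope f (fun _ => 0) huv hcont hderiv
    have hvu : v - u ≠ 0 := by intro hh; linarith [sub_pos.2 huv]
    field_simp [hvu] at hc2
    linarith
  rcases lt_trichotomy x y with h1 | h1 | h1
  · exact key x y hx hy h1
  · rw [h1]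
  · exact (key y x hy hx h1).symm

lemma F_deriv {y : ℝ} (hy : y ∈ Set.Ioo (0:ℝ) 1) :
    HasDerivAt (fun z => Li 2 z + Li 2 (1 - z) + Real.log z * Real.log (1 - z)) 0 y := by
  obtain ⟨hy0, hy1⟩ := hy
  have hy0' : y ≠ 0 := ne_of_gt hy0
  have h1y0 : (0:ℝ) < 1 - y := by linarith
  have h1y0' : 1 - y ≠ 0 := ne_of_gt h1y0
  have habs : |y| < 1 := abs_lt.2 ⟨by linarith, hy1⟩
  have habs' : |1 - y| < 1 := abs_lt.2 ⟨by linarith, by linarith⟩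
  have hA : HasDerivAt (Li 2) (-Real.log (1 - y) / y) y := hasDerivAt_L2' habs hy0'
  have hin : HasDerivAt (fun z : ℝ => 1 - z) (-1) y := by
    simpa using (hasDerivAt_id y).const_sub 1
  have hB0 : HasDerivAt (Li 2) (-Real.log (1 - (1 - y)) / (1 - y)) (1 - y) :=
    hasDerivAt_L2' habs' h1y0'
  have hB : HasDerivAt (fun z => Li 2 (1 - z)) ((-Real.log (1 - (1 - y)) / (1 - y)) * (-1)) y :=
    hB0.comp y hin
  have hlog1 : HasDerivAt Real.log y⁻¹ y := Real.hasDerivAt_log hy0'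
  have hlog2 : HasDerivAt (fun z => Real.log (1 - z)) ((1 - y)⁻¹ * (-1)) y :=
    (Real.hasDerivAt_log h1y0').comp y hin
  have hC : HasDerivAt (fun z => Real.log z * Real.log (1 - z))
      (y⁻¹ * Real.log (1 - y) + Real.log y * ((1 - y)⁻¹ * (-1))) y := hlog1.mul hlog2
  have := (hA.add hB).add hC
  refine this.congr_deriv ?_
  have h11 : 1 - (1 - y) = y := by ring
  rw [h11]
  field_simp
  ring

lemma L2_reflection {x : ℝ} (hx : x ∈ Set.Ioo (0:ℝ) 1) :
    Li 2 x + Li 2 (1 - x) + Real.log x * Real.log (1 - x) = π ^ 2 / 6 := by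
  set F : ℝ → ℝ := fun z => Li 2 z + Li 2 (1 - z) + Real.log z * Real.log (1 - z) with hF
  have hhalf : (1/2 : ℝ) ∈ Set.Ioo (0:ℝ) 1 := by norm_num
  have hconst : ∀ y ∈ Set.Ioo (0:ℝ) 1, F y = F (1/2) := fun y hy =>
    const_of_deriv (fun z hz => F_deriv hz) hy hhalf
  set l := nhdsWithin (1:ℝ) (Set.Ioo (0:ℝ) 1) with hl
  have hne : l.NeBot := by
    rw [hl]
    refine mem_closure_iff_nhdsWithin_neBot.1 ?_
    rw [closure_Ioo (by norm_num : (0:ℝ) ≠ 1)]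
    exact ⟨by norm_num, le_refl 1⟩
  -- limit of each piece
  have p1 : Filter.Tendsto (Li 2) l (nhds (π ^ 2 / 6)) := by
    have hc : ContinuousWithinAt (Li 2) (Set.Ioo (0:ℝ) 1) 1 :=
      (L2_continuousOn 1 ⟨by norm_num, le_refl 1⟩).mono
        (fun z hz => ⟨by linarith [hz.1], le_of_lt hz.2⟩)
    rw [← L2_one]
    exact hc
  have hsub : Filter.Tendsto (fun y : ℝ => 1 - y) l (nhds 0) := by
    have : Filter.Tendsto (fun y : ℝ => 1 - y) (nhds 1) (nhds 0) := by
      have := ((continuous_const (y := (1:ℝ))).sub continuous_id).tendsto (1:ℝ)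
      simpa [Pi.sub_def] using this
    exact this.mono_left nhdsWithin_le_nhds
  have p2 : Filter.Tendsto (fun y => Li 2 (1 - y)) l (nhds 0) := by
    have := (L2_contAt (by norm_num : |(0:ℝ)| < 1)).tendsto.comp hsub
    rwa [L2_zero] at this
  have p3 : Filter.Tendsto (fun y => Real.log y * Real.log (1 - y)) l (nhds 0) := by
    have hsub' : Filter.Tendsto (fun y : ℝ => 1 - y) l (nhdsWithin 0 (Set.Ioi 0)) := by
      rw [tendsto_nhdsWithin_iff]
      refine ⟨hsub, ?_⟩
      filter_upwards [self_mem_nhdsWithin] with y hy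
      exact sub_pos.2 hy.2
    have hlim : Filter.Tendsto (fun y : ℝ => Real.log (1 - y) * (1 - y)) l (nhds 0) := by
      have h0 := tendsto_log_mul_rpow_nhdsGT_zero (one_pos)
      have h0' : Filter.Tendsto (fun t : ℝ => Real.log t * t) (nhdsWithin 0 (Set.Ioi 0)) (nhds 0) := by
        refine h0.congr' ?_
        filter_upwards [self_mem_nhdsWithin] with t ht
        rw [Real.rpow_one]
      exact h0'.comp hsub'
    have hlim2 : Filter.Tendsto (fun y : ℝ => 2 * |Real.log (1 - y) * (1 - y)|) l (nhds 0) := by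
      have := (hlim.abs).const_mul 2
      simpa using this
    refine squeeze_zero_norm' ?_ hlim2
    have hmem : Set.Ioo (1/2 : ℝ) 1 ∈ l := by
      rw [hl]
      exact mem_nhdsWithin.2 ⟨Set.Ioi (1/2), isOpen_Ioi, by norm_num,
        fun z hz => ⟨hz.1, hz.2.2⟩⟩
    filter_upwards [hmem, self_mem_nhdsWithin] with y hy hy'
    obtain ⟨hy2, hy3⟩ := hy
    have hy0 : (0:ℝ) < y := by linarith
    have h1y : (0:ℝ) < 1 - y := by linarith
    have hlogy : |Real.log y| ≤ 2 * (1 - y) := by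
      have hle : Real.log y ≤ 0 := Real.log_nonpos (le_of_lt hy0) (le_of_lt hy3)
      have hinv : Real.log y⁻¹ ≤ y⁻¹ - 1 := Real.log_le_sub_one_of_pos (by positivity)
      rw [Real.log_inv] at hinv
      have hyi : y⁻¹ ≤ 2 := by
        rw [inv_le_comm₀ hy0 (by norm_num)]
        linarith
      have hyi2 : y⁻¹ - 1 = (1 - y) / y := by field_simp
      rw [abs_of_nonpos hle]
      rw [hyi2] at hinv
      have : (1 - y) / y ≤ 2 * (1 - y) := by
        rw [div_le_iff₀ hy0]
        nlinarith
      linarith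
    rw [norm_eq_abs, abs_mul]
    calc |Real.log y| * |Real.log (1 - y)| ≤ (2 * (1 - y)) * |Real.log (1 - y)| := by
          apply mul_le_mul_of_nonneg_right hlogy (abs_nonneg _)
      _ = 2 * |Real.log (1 - y) * (1 - y)| := by
          rw [abs_mul, abs_of_pos h1y]; ring
  have hFlim : Filter.Tendsto F l (nhds (π ^ 2 / 6 + 0 + 0)) := (p1.add p2).add p3
  have hFlim2 : Filter.Tendsto F l (nhds (F (1/2))) := by
    refine Filter.Tendsto.congr' ?_ tendsto_const_nhds
    filter_upwards [self_mem_nhdsWithin] with y hy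
    exact (hconst y hy).symm
  have := tendsto_nhds_unique hFlim2 hFlim
  have hx' := hconst x hx
  have : F x = π ^ 2 / 6 := by rw [hx', this]; ring
  simpa [hF] using this

lemma G_deriv {y : ℝ} (hy : y ∈ Set.Ioo (0:ℝ) (1/2)) :
    HasDerivAt (fun z => Li 2 z + Li 2 (z / (z - 1)) + Real.log (1 - z) ^ 2 / 2) 0 y := by
  obtain ⟨hy0, hy1⟩ := hy
  have hy0' : y ≠ 0 := ne_of_gt hy0
  have h1y0 : (0:ℝ) < 1 - y := by linarith
  have h1y0' : 1 - y ≠ 0 := ne_of_gt h1y0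
  have hym1 : y - 1 ≠ 0 := by intro h; apply h1y0'; linarith
  have habs : |y| < 1 := abs_lt.2 ⟨by linarith, by linarith⟩
  set u : ℝ := y / (y - 1) with hu
  have huval : u = -y / (1 - y) := by rw [hu]; field_simp; ring
  have hu0 : u ≠ 0 := by
    rw [hu]; exact div_ne_zero hy0' hym1
  have huabs : |u| < 1 := by
    rw [huval, abs_div, abs_of_pos h1y0, abs_neg, abs_of_pos hy0, div_lt_one h1y0]
    linarith
  have h1u : 1 - u = (1 - y)⁻¹ := by
    rw [hu]; field_simp; ring
  have hlogu : Real.log (1 - u) = -Real.log (1 - y) := by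
    rw [h1u, Real.log_inv]
  -- derivative of inner map z / (z-1)
  have hinner : HasDerivAt (fun z : ℝ => z / (z - 1))
      ((1 * (y - 1) - y * 1) / (y - 1) ^ 2) y :=
    (hasDerivAt_id y).div ((hasDerivAt_id y).sub_const 1) hym1
  have hA : HasDerivAt (Li 2) (-Real.log (1 - y) / y) y := hasDerivAt_L2' habs hy0'
  have hB0 : HasDerivAt (Li 2) (-Real.log (1 - u) / u) u := hasDerivAt_L2' huabs hu0
  have hB : HasDerivAt (fun z => Li 2 (z / (z - 1)))
      ((-Real.log (1 - u) / u) * ((1 * (y - 1) - y * 1) / (y - 1) ^ 2)) y := by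
    have := hB0.comp y hinner
    exact this
  have hlog2 : HasDerivAt (fun z : ℝ => Real.log (1 - z)) ((1 - y)⁻¹ * (-1)) y := by
    have hin : HasDerivAt (fun z : ℝ => 1 - z) (-1) y := by
      simpa using (hasDerivAt_id y).const_sub 1
    exact (Real.hasDerivAt_log h1y0').comp y hin
  have hC : HasDerivAt (fun z => Real.log (1 - z) ^ 2 / 2)
      ((2 * Real.log (1 - y) ^ 1 * ((1 - y)⁻¹ * (-1))) / 2) y := (hlog2.pow 2).div_const 2
  have := (hA.add hB).add hC
  refine this.congr_deriv ?_
  rw [hlogu, huval]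
  field_simp
  ring

lemma landen {x : ℝ} (hx : x ∈ Set.Ioo (0:ℝ) (1/2)) :
    Li 2 x + Li 2 (x / (x - 1)) + Real.log (1 - x) ^ 2 / 2 = 0 := by
  set G : ℝ → ℝ := fun z => Li 2 z + Li 2 (z / (z - 1)) + Real.log (1 - z) ^ 2 / 2 with hG
  have hq : (1/4 : ℝ) ∈ Set.Ioo (0:ℝ) (1/2) := by norm_num
  have hconst : ∀ y ∈ Set.Ioo (0:ℝ) (1/2), G y = G (1/4) := fun y hy =>
    const_of_deriv (fun z hz => G_deriv hz) hy hq
  set l := nhdsWithin (0:ℝ) (Set.Ioo (0:ℝ) (1/2)) with hl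
  have hne : l.NeBot := by
    rw [hl]
    refine mem_closure_iff_nhdsWithin_neBot.1 ?_
    rw [closure_Ioo (by norm_num : (0:ℝ) ≠ 1/2)]
    exact ⟨le_refl 0, by norm_num⟩
  have p1 : Filter.Tendsto (Li 2) l (nhds 0) := by
    have := (L2_contAt (by norm_num : |(0:ℝ)| < 1)).tendsto.mono_left
      (nhdsWithin_le_nhds (s := Set.Ioo (0:ℝ) (1/2)))
    rwa [L2_zero] at this
  have hinner : Filter.Tendsto (fun z : ℝ => z / (z - 1)) l (nhds 0) := by
    have hc : ContinuousAt (fun z : ℝ => z / (z - 1)) 0 :=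
      (continuous_id.continuousAt).div ((continuous_id.sub continuous_const).continuousAt)
        (by norm_num)
    have hc' : Filter.Tendsto (fun z : ℝ => z / (z - 1)) (nhds 0) (nhds 0) := by
      simpa using hc.tendsto
    exact hc'.mono_left (nhdsWithin_le_nhds (s := Set.Ioo (0:ℝ) (1/2)))
  have p2 : Filter.Tendsto (fun z : ℝ => Li 2 (z / (z - 1))) l (nhds 0) := by
    have := (L2_contAt (by norm_num : |(0:ℝ)| < 1)).tendsto.comp hinner
    rwa [L2_zero] at this
  have p3 : Filter.Tendsto (fun z : ℝ => Real.log (1 - z) ^ 2 / 2) l (nhds 0) := by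
    have hc : ContinuousAt (fun z : ℝ => Real.log (1 - z) ^ 2 / 2) 0 := by
      have h1 : ContinuousAt (fun z : ℝ => 1 - z) 0 := by fun_prop
      have h2 : ContinuousAt Real.log ((fun z : ℝ => 1 - z) 0) := by
        apply Real.continuousAt_log; norm_num
      exact (((h2.comp h1).pow 2).div_const 2)
    have hc' : Filter.Tendsto (fun z : ℝ => Real.log (1 - z) ^ 2 / 2) (nhds 0) (nhds 0) := by
      simpa using hc.tendsto
    exact hc'.mono_left (nhdsWithin_le_nhds (s := Set.Ioo (0:ℝ) (1/2)))
  have hGlim : Filter.Tendsto G l (nhds (0 + 0 + 0)) := (p1.add p2).add p3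
  have hGlim2 : Filter.Tendsto G l (nhds (G (1/4))) := by
    refine Filter.Tendsto.congr' ?_ tendsto_const_nhds
    filter_upwards [self_mem_nhdsWithin] with y hy
    exact (hconst y hy).symm
  have h0 := tendsto_nhds_unique hGlim2 hGlim
  have hx' := hconst x hx
  have : G x = 0 := by rw [hx', h0]; ring
  simpa [hG] using this

lemma dup {x : ℝ} (hx : |x| < 1) : Li 2 (x ^ 2) = 2 * Li 2 x + 2 * Li 2 (-x) := by
  have hx' : |x| ≤ 1 := le_of_lt hx
  have hxn : |(-x)| ≤ 1 := by rwa [abs_neg]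
  have hA := hasSum_L2 hx'
  have hB := hasSum_L2 hxn
  have hAB : HasSum (fun n : ℕ => x ^ (n+1) / ((n:ℝ)+1)^2 + (-x) ^ (n+1) / ((n:ℝ)+1)^2)
      (Li 2 x + Li 2 (-x)) := hA.add hB
  set h : ℕ → ℝ := fun n => x ^ (n+1) / ((n:ℝ)+1)^2 + (-x) ^ (n+1) / ((n:ℝ)+1)^2 with hh
  have hi : Function.Injective (fun m : ℕ => 2 * m + 1) := by
    intro a b hab
    simp only at hab
    omega
  have hvanish : ∀ n, n ∉ Set.range (fun m : ℕ => 2 * m + 1) → h n = 0 := by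
    intro n hn
    have heven : Even n := by
      rcases Nat.even_or_odd n with he | ho
      · exact he
      · obtain ⟨m, hm⟩ := ho
        exact absurd ⟨m, by simp only; omega⟩ hn
    have hodd : Odd (n + 1) := heven.add_one
    rw [hh]
    simp only
    rw [hodd.neg_pow]
    ring
  have hcomp : HasSum (h ∘ fun m : ℕ => 2 * m + 1) (Li 2 x + Li 2 (-x)) :=
    (hi.hasSum_iff hvanish).2 hAB
  have hcongr : HasSum (fun m : ℕ => (x^2) ^ (m+1) / ((m:ℝ)+1)^2 / 2) (Li 2 x + Li 2 (-x)) := by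
    refine hcomp.congr_fun fun m => ?_
    show _ = h (2 * m + 1)
    rw [hh]
    simp only
    have h1 : (-x) ^ (2*m+1+1) = x ^ (2*m+1+1) := by
      rw [show 2*m+1+1 = 2*(m+1) by ring]
      rw [pow_mul, pow_mul, neg_sq]
    rw [h1]
    have h2 : x ^ (2*m+1+1) = (x^2) ^ (m+1) := by rw [← pow_mul]; ring_nf
    have h3 : ((2*m+1 : ℕ) : ℝ) + 1 = 2 * ((m:ℝ)+1) := by push_cast; ring
    rw [h2, h3]
    field_simp
    ring
  have hfinal : HasSum (fun m : ℕ => (x^2) ^ (m+1) / ((m:ℝ)+1)^2)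
      (2 * (Li 2 x + Li 2 (-x))) := by
    have := hcongr.mul_left 2
    refine this.congr_fun fun m => ?_
    ring
  rw [show Li 2 (x^2) = ∑' m : ℕ, (x^2) ^ (m+1) / ((m:ℝ)+1)^2 from rfl, hfinal.tsum_eq]
  ring

theorem stmt8 :
    Li 2 ((((Real.sqrt 5 - 1) / 2)) ^ 2) = π ^ 2 / 15 - Real.log (((Real.sqrt 5 - 1) / 2)) ^ 2 := by
  set φ : ℝ := (Real.sqrt 5 - 1) / 2 with hφdef
  have h5 : Real.sqrt 5 ^ 2 = 5 := Real.sq_sqrt (by norm_num)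
  have h5nn : (0:ℝ) ≤ Real.sqrt 5 := Real.sqrt_nonneg 5
  have hs2 : 2 < Real.sqrt 5 := by nlinarith
  have hs3 : Real.sqrt 5 < 3 := by nlinarith
  have hφ0 : 0 < φ := by rw [hφdef]; linarith
  have hφhalf : 1/2 < φ := by rw [hφdef]; linarith
  have hφ1 : φ < 1 := by rw [hφdef]; linarith
  have hφsq : φ ^ 2 = 1 - φ := by rw [hφdef]; nlinarith
  have hmem1 : φ ^ 2 ∈ Set.Ioo (0:ℝ) 1 := ⟨by positivity, by nlinarith⟩
  have hmem2 : φ ^ 2 ∈ Set.Ioo (0:ℝ) (1/2) := ⟨by positivity, by nlinarith⟩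
  have habsφ : |φ| < 1 := abs_lt.2 ⟨by linarith, hφ1⟩
  have h1mφ2 : 1 - φ ^ 2 = φ := by linarith [hφsq]
  have hne : φ ^ 2 - 1 ≠ 0 := by nlinarith
  have hu : φ ^ 2 / (φ ^ 2 - 1) = -φ := by
    field_simp
    nlinarith
  have h1 := L2_reflection hmem1
  rw [h1mφ2] at h1
  have hlogsq : Real.log (φ ^ 2) = 2 * Real.log φ := by
    rw [Real.log_pow]; push_cast; ring
  rw [hlogsq] at h1
  have h2 := landen hmem2
  rw [hu, h1mφ2] at h2
  have h3 := dup habsφ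
  linear_combination (2/5) * h1 + (2/5) * h2 + (1/5) * h3
end

section
/- For 0 < x < 1, Li_{3,1}(x) + Li_{3,1}(1-x) = ln(x)*(ζ(3) - Li_3(1-x) + ln(1-x)*Li_2(1-x)) + ζ(3,1) + ln(1-x)*Li_{2,1}(1-x) + (1/4)*ln^2(x)*ln^2(1-x), where ζ(3,1) = π^4/360. -/
open Real Finset

open Filter Set Topology

lemma H_zero : H 0 = 0 := by simp [H]

lemma H_succ (n : ℕ) : H (n + 1) = H n + 1 / ((n : ℝ) + 1) := by
  simp [H, Finset.sum_range_succ]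

lemma H_nonneg (n : ℕ) : 0 ≤ H n :=
  Finset.sum_nonneg fun k _ => by positivity

lemma H_le (n : ℕ) : H n ≤ n := by
  calc H n ≤ ∑ k ∈ Finset.range n, 1 := by
        apply Finset.sum_le_sum
        intro k _
        rw [div_le_one (by positivity)]
        linarith [Nat.cast_nonneg (α := ℝ) k]
    _ = n := by simp

lemma H2_nonneg (n : ℕ) : 0 ≤ H2 n :=
  Finset.sum_nonneg fun k _ => by positivity

lemma H2_le (n : ℕ) : H2 n ≤ 2 - 2 / ((n : ℝ) + 1) := by
  induction n with
  | zero => simp [H2]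
  | succ n ih =>
    rw [show H2 (n+1) = H2 n + 1/((n:ℝ)+1)^2 by simp [H2, Finset.sum_range_succ]]
    have h1 : (0:ℝ) < (n:ℝ) + 1 := by positivity
    have h2 : (0:ℝ) < (n:ℝ) + 2 := by positivity
    have key : 1/((n:ℝ)+1)^2 ≤ 2/((n:ℝ)+1) - 2/((n:ℝ)+2) := by
      rw [div_sub_div _ _ (ne_of_gt h1) (ne_of_gt h2), div_le_div_iff₀ (by positivity) (by positivity)]
      ring_nf
      nlinarith [Nat.cast_nonneg (α := ℝ) n]
    push_cast
    rw [show ((n:ℝ) + 1 + 1) = (n:ℝ) + 2 by ring]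
    linarith

lemma summable_coeff {a : ℕ → ℝ} (ha : ∀ n, |a n| ≤ 1) {x : ℝ} (hx : |x| < 1) :
    Summable fun n => a n * x ^ (n + 1) := by
  refine Summable.of_norm_bounded (g := fun n => |x| ^ (n + 1)) ?_ ?_
  · have := (summable_geometric_of_lt_one (abs_nonneg x) hx).mul_left |x|
    refine this.congr fun n => ?_
    rw [← pow_succ']
  · intro n
    rw [norm_mul, norm_pow, Real.norm_eq_abs, Real.norm_eq_abs]
    calc |a n| * |x| ^ (n+1) ≤ 1 * |x| ^ (n+1) := by
          apply mul_le_mul_of_nonneg_right (ha n) (by positivity)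
      _ = |x| ^ (n+1) := one_mul _

lemma hasDerivAt_tsum_coeff {a : ℕ → ℝ} (ha : ∀ n, |a n| ≤ 1) {x : ℝ} (hx : |x| < 1) :
    HasDerivAt (fun y => ∑' n : ℕ, a n * y ^ (n + 1)) (∑' n : ℕ, ((n : ℝ) + 1) * a n * x ^ n) x := by
  set r : ℝ := (|x| + 1) / 2 with hr
  have hxr : |x| < r := by rw [hr]; linarith
  have hr0 : 0 < r := lt_of_le_of_lt (abs_nonneg x) hxr
  have hr1 : r < 1 := by rw [hr]; linarith
  have hu : Summable fun n : ℕ => ((n : ℝ) + 1) * r ^ n := by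
    have h1 := summable_pow_mul_geometric_of_norm_lt_one 1 (r := r) (by rwa [Real.norm_eq_abs, abs_of_pos hr0])
    have h2 := summable_geometric_of_lt_one hr0.le hr1
    refine (h1.add h2).congr fun n => ?_
    push_cast
    ring
  refine hasDerivAt_tsum_of_isPreconnected (g := fun n y => a n * y ^ (n + 1))
    (g' := fun n y => ((n : ℝ) + 1) * a n * y ^ n) hu (isOpen_Ioo (a := -r) (b := r))
    (convex_Ioo _ _).isPreconnected (fun n y _ => ?_) (fun n y hy => ?_)
    (Set.mem_Ioo.mpr ⟨by linarith, hr0⟩) ?_ (Set.mem_Ioo.mpr ⟨neg_lt_of_abs_lt hxr, lt_of_abs_lt hxr⟩)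
  · have := (hasDerivAt_pow (n + 1) y).const_mul (a n)
    refine this.congr_deriv (Eq.symm ?_)
    push_cast
    ring
  · have hy' : |y| ≤ r := le_of_lt (abs_lt.mpr ⟨hy.1, hy.2⟩)
    rw [Real.norm_eq_abs, abs_mul, abs_mul, abs_pow]
    calc |(n:ℝ)+1| * |a n| * |y| ^ n ≤ ((n:ℝ)+1) * 1 * r ^ n := by
          apply mul_le_mul
          · rw [abs_of_nonneg (by positivity : (0:ℝ) ≤ (n:ℝ)+1)]
            exact mul_le_mul_of_nonneg_left (ha n) (by positivity)
          · exact pow_le_pow_left₀ (abs_nonneg y) hy' n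
          · positivity
          · positivity
      _ = ((n:ℝ)+1) * r ^ n := by ring
  · refine (summable_zero).congr fun n => ?_
    simp

lemma sum_antidiagonal_inv (n : ℕ) :
    ∑ p ∈ Finset.HasAntidiagonal.antidiagonal n, 1 / ((p.1 : ℝ) + 1) * (1 / ((p.2 : ℝ) + 1)) =
      2 * H (n + 1) / ((n : ℝ) + 2) := by
  rw [Finset.Nat.sum_antidiagonal_eq_sum_range_succ_mk]
  have key : ∀ k ∈ Finset.range (n + 1),
      1 / ((k : ℝ) + 1) * (1 / (((n - k : ℕ) : ℝ) + 1)) =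
        1 / ((n : ℝ) + 2) * (1 / ((k : ℝ) + 1) + 1 / (((n - k : ℕ) : ℝ) + 1)) := by
    intro k hk
    have hkn : k ≤ n := Nat.lt_succ_iff.mp (Finset.mem_range.mp hk)
    have hcast : ((n - k : ℕ) : ℝ) = (n : ℝ) - k := by
      push_cast [Nat.cast_sub hkn]; ring
    rw [hcast]
    have h1 : (0:ℝ) < (k : ℝ) + 1 := by positivity
    have h2 : (0:ℝ) < (n : ℝ) - k + 1 := by
      have : (k:ℝ) ≤ n := Nat.cast_le.mpr hkn
      linarith
    have h3 : (0:ℝ) < (n : ℝ) + 2 := by positivity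
    field_simp
    ring
  rw [Finset.sum_congr rfl key, ← Finset.mul_sum]
  have hrefl : ∑ k ∈ Finset.range (n + 1), 1 / (((n - k : ℕ) : ℝ) + 1) =
      ∑ k ∈ Finset.range (n + 1), 1 / ((k : ℝ) + 1) := by
    have := Finset.sum_range_reflect (fun j => 1 / ((j : ℝ) + 1)) (n + 1)
    rw [← this]
    apply Finset.sum_congr rfl
    intro k hk
    congr 2 <;> omega
  rw [Finset.sum_add_distrib, hrefl]
  have : ∑ k ∈ Finset.range (n + 1), 1 / ((k : ℝ) + 1) = H (n + 1) := rfl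
  rw [this]
  ring

lemma sum_antidiagonal_inv_sq (n : ℕ) :
    ∑ p ∈ Finset.HasAntidiagonal.antidiagonal n, 1 / ((p.1 : ℝ) + 1) ^ 2 * (1 / ((p.2 : ℝ) + 1) ^ 2) =
      2 * H2 (n + 1) / ((n : ℝ) + 2) ^ 2 + 4 * H (n + 1) / ((n : ℝ) + 2) ^ 3 := by
  rw [Finset.Nat.sum_antidiagonal_eq_sum_range_succ_mk]
  have key : ∀ k ∈ Finset.range (n + 1),
      1 / ((k : ℝ) + 1) ^ 2 * (1 / (((n - k : ℕ) : ℝ) + 1) ^ 2) =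
        1 / ((n : ℝ) + 2) ^ 2 * (1 / ((k : ℝ) + 1) ^ 2 + 1 / (((n - k : ℕ) : ℝ) + 1) ^ 2)
          + 2 / ((n : ℝ) + 2) ^ 3 * (1 / ((k : ℝ) + 1) + 1 / (((n - k : ℕ) : ℝ) + 1)) := by
    intro k hk
    have hkn : k ≤ n := Nat.lt_succ_iff.mp (Finset.mem_range.mp hk)
    have hcast : ((n - k : ℕ) : ℝ) = (n : ℝ) - k := by
      push_cast [Nat.cast_sub hkn]; ring
    rw [hcast]
    have h1 : (0:ℝ) < (k : ℝ) + 1 := by positivity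
    have h2 : (0:ℝ) < (n : ℝ) - k + 1 := by
      have : (k:ℝ) ≤ n := Nat.cast_le.mpr hkn
      linarith
    have h3 : (0:ℝ) < (n : ℝ) + 2 := by positivity
    field_simp
    ring
  rw [Finset.sum_congr rfl key]
  have hreflH : ∑ k ∈ Finset.range (n + 1), 1 / (((n - k : ℕ) : ℝ) + 1) =
      ∑ k ∈ Finset.range (n + 1), 1 / ((k : ℝ) + 1) := by
    have := Finset.sum_range_reflect (fun j => 1 / ((j : ℝ) + 1)) (n + 1)
    rw [← this]
    exact Finset.sum_congr rfl fun k hk => by (congr 2 <;> omega)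
  have hreflH2 : ∑ k ∈ Finset.range (n + 1), 1 / (((n - k : ℕ) : ℝ) + 1) ^ 2 =
      ∑ k ∈ Finset.range (n + 1), 1 / ((k : ℝ) + 1) ^ 2 := by
    have := Finset.sum_range_reflect (fun j => 1 / ((j : ℝ) + 1) ^ 2) (n + 1)
    rw [← this]
    exact Finset.sum_congr rfl fun k hk => by (congr 3 <;> omega)
  rw [Finset.sum_add_distrib, ← Finset.mul_sum, ← Finset.mul_sum,
    Finset.sum_add_distrib, Finset.sum_add_distrib, hreflH, hreflH2]
  have e1 : ∑ k ∈ Finset.range (n + 1), 1 / ((k : ℝ) + 1) = H (n + 1) := rfl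
  have e2 : ∑ k ∈ Finset.range (n + 1), 1 / ((k : ℝ) + 1) ^ 2 = H2 (n + 1) := rfl
  rw [e1, e2]
  ring






lemma bound_pow (m n : ℕ) : |1 / ((n : ℝ) + 1) ^ m| ≤ 1 := by
  rw [abs_of_nonneg (by positivity)]
  rw [div_le_one (by positivity)]
  calc (1:ℝ) = 1 ^ m := (one_pow m).symm
    _ ≤ ((n : ℝ) + 1) ^ m := pow_le_pow_left₀ (by norm_num) (by linarith [Nat.cast_nonneg (α := ℝ) n]) m

lemma bound_H_div (m n : ℕ) (hm : 1 ≤ m) : |H n / ((n : ℝ) + 1) ^ m| ≤ 1 := by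
  rw [abs_of_nonneg (div_nonneg (H_nonneg n) (by positivity))]
  rw [div_le_one (by positivity)]
  calc H n ≤ n := H_le n
    _ ≤ (n : ℝ) + 1 := by linarith
    _ ≤ ((n : ℝ) + 1) ^ m := le_self_pow₀ (by linarith [Nat.cast_nonneg (α := ℝ) n]) (by omega)

lemma Li_eq_tsum (m : ℕ) (x : ℝ) : Li m x = ∑' n : ℕ, 1 / ((n : ℝ) + 1) ^ m * x ^ (n + 1) :=
  tsum_congr fun n => by rw [mul_comm, mul_one_div]

lemma Li21_eq_tsum (x : ℝ) : Li21 x = ∑' n : ℕ, H n / ((n : ℝ) + 1) ^ 2 * x ^ (n + 1) :=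
  tsum_congr fun n => by ring

lemma Li31_eq_tsum (x : ℝ) : Li31 x = ∑' n : ℕ, H n / ((n : ℝ) + 1) ^ 3 * x ^ (n + 1) :=
  tsum_congr fun n => by ring

lemma summable_Li (m : ℕ) {x : ℝ} (hx : |x| < 1) :
    Summable fun n : ℕ => 1 / ((n : ℝ) + 1) ^ m * x ^ (n + 1) :=
  summable_coeff (bound_pow m) hx

lemma summable_H_div (m : ℕ) (hm : 1 ≤ m) {x : ℝ} (hx : |x| < 1) :
    Summable fun n : ℕ => H n / ((n : ℝ) + 1) ^ m * x ^ (n + 1) :=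
  summable_coeff (fun n => bound_H_div m n hm) hx

lemma Li_one_eq {x : ℝ} (hx : |x| < 1) : Li 1 x = -log (1 - x) := by
  rw [show Li 1 x = ∑' n : ℕ, x ^ (n + 1) / ((n : ℝ) + 1) by
    exact tsum_congr fun n => by rw [pow_one]]
  exact (hasSum_pow_div_log_of_abs_lt_one hx).tsum_eq

lemma tsum_shift_mul {x : ℝ} (hx0 : x ≠ 0) (b : ℕ → ℝ) :
    ∑' n : ℕ, b n * x ^ n = (∑' n : ℕ, b n * x ^ (n + 1)) / x := by
  rw [eq_div_iff hx0, ← tsum_mul_right]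
  exact tsum_congr fun n => by rw [mul_assoc, ← pow_succ]

lemma hasDerivAt_Li2 {x : ℝ} (hx : |x| < 1) (hx0 : x ≠ 0) :
    HasDerivAt (Li 2) (-log (1 - x) / x) x := by
  have key := hasDerivAt_tsum_coeff (bound_pow 2) hx
  rw [show (fun y => ∑' n : ℕ, 1 / ((n : ℝ) + 1) ^ 2 * y ^ (n + 1)) = Li 2 from
    funext fun y => (Li_eq_tsum 2 y).symm] at key
  have e2 : ∑' n : ℕ, ((n : ℝ) + 1) * (1 / ((n : ℝ) + 1) ^ 2) * x ^ n = -log (1 - x) / x := by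
    rw [show (fun n : ℕ => ((n : ℝ) + 1) * (1 / ((n : ℝ) + 1) ^ 2) * x ^ n) =
        fun n : ℕ => 1 / ((n : ℝ) + 1) ^ 1 * x ^ n from funext fun n => by
      have h1 : ((n : ℝ) + 1) ≠ 0 := by positivity
      field_simp]
    rw [tsum_shift_mul hx0, ← Li_eq_tsum, Li_one_eq hx]
  rwa [e2] at key

lemma hasDerivAt_Li3 {x : ℝ} (hx : |x| < 1) (hx0 : x ≠ 0) :
    HasDerivAt (Li 3) (Li 2 x / x) x := by
  have key := hasDerivAt_tsum_coeff (bound_pow 3) hx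
  rw [show (fun y => ∑' n : ℕ, 1 / ((n : ℝ) + 1) ^ 3 * y ^ (n + 1)) = Li 3 from
    funext fun y => (Li_eq_tsum 3 y).symm] at key
  have e2 : ∑' n : ℕ, ((n : ℝ) + 1) * (1 / ((n : ℝ) + 1) ^ 3) * x ^ n = Li 2 x / x := by
    rw [show (fun n : ℕ => ((n : ℝ) + 1) * (1 / ((n : ℝ) + 1) ^ 3) * x ^ n) =
        fun n : ℕ => 1 / ((n : ℝ) + 1) ^ 2 * x ^ n from funext fun n => by
      have h1 : ((n : ℝ) + 1) ≠ 0 := by positivity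
      field_simp]
    rw [tsum_shift_mul hx0, ← Li_eq_tsum]
  rwa [e2] at key

lemma hasDerivAt_Li31 {x : ℝ} (hx : |x| < 1) (hx0 : x ≠ 0) :
    HasDerivAt Li31 (Li21 x / x) x := by
  have key := hasDerivAt_tsum_coeff (fun n => bound_H_div 3 n (by norm_num)) hx
  rw [show (fun y => ∑' n : ℕ, H n / ((n : ℝ) + 1) ^ 3 * y ^ (n + 1)) = Li31 from
    funext fun y => (Li31_eq_tsum y).symm] at key
  have e2 : ∑' n : ℕ, ((n : ℝ) + 1) * (H n / ((n : ℝ) + 1) ^ 3) * x ^ n = Li21 x / x := by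
    rw [show (fun n : ℕ => ((n : ℝ) + 1) * (H n / ((n : ℝ) + 1) ^ 3) * x ^ n) =
        fun n : ℕ => H n / ((n : ℝ) + 1) ^ 2 * x ^ n from funext fun n => by
      have h1 : ((n : ℝ) + 1) ≠ 0 := by positivity
      field_simp]
    rw [tsum_shift_mul hx0, ← Li21_eq_tsum]
  rwa [e2] at key

set_option maxHeartbeats 1600000 in
lemma Li11_eq {x : ℝ} (hx : |x| < 1) :
    ∑' n : ℕ, H n / ((n : ℝ) + 1) * x ^ (n + 1) = log (1 - x) ^ 2 / 2 := by
  have hb : ∀ n : ℕ, |1 / ((n : ℝ) + 1) * x ^ (n + 1)| ≤ |x| ^ (n + 1) := by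
    intro n
    rw [abs_mul, abs_pow]
    calc |1 / ((n : ℝ) + 1)| * |x| ^ (n + 1) ≤ 1 * |x| ^ (n + 1) := by
          apply mul_le_mul_of_nonneg_right _ (by positivity)
          simpa using bound_pow 1 n
      _ = |x| ^ (n + 1) := one_mul _
  have hgeom : Summable fun n : ℕ => |x| ^ (n + 1) := by
    have := (summable_geometric_of_lt_one (abs_nonneg x) hx).mul_left |x|
    exact this.congr fun n => by rw [← pow_succ']
  have hf : Summable fun n : ℕ => ‖1 / ((n : ℝ) + 1) * x ^ (n + 1)‖ := by
    refine Summable.of_nonneg_of_le (fun n => norm_nonneg _) (fun n => ?_) hgeom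
    rw [Real.norm_eq_abs]; exact hb n
  have cauchy := tsum_mul_tsum_eq_tsum_sum_antidiagonal_of_summable_norm hf hf
  have hlog : ∑' n : ℕ, 1 / ((n : ℝ) + 1) * x ^ (n + 1) = -log (1 - x) := by
    calc ∑' n : ℕ, 1 / ((n : ℝ) + 1) * x ^ (n + 1)
        = ∑' n : ℕ, x ^ (n + 1) / ((n : ℝ) + 1) := tsum_congr fun n => by ring
      _ = -log (1 - x) := (hasSum_pow_div_log_of_abs_lt_one hx).tsum_eq
  rw [hlog] at cauchy
  have inner : ∀ n : ℕ, ∑ p ∈ Finset.HasAntidiagonal.antidiagonal n,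
      (1 / ((p.1 : ℝ) + 1) * x ^ (p.1 + 1)) * (1 / ((p.2 : ℝ) + 1) * x ^ (p.2 + 1)) =
      2 * H (n + 1) / ((n : ℝ) + 2) * x ^ (n + 2) := by
    intro n
    have : ∀ p ∈ Finset.HasAntidiagonal.antidiagonal n,
        (1 / ((p.1 : ℝ) + 1) * x ^ (p.1 + 1)) * (1 / ((p.2 : ℝ) + 1) * x ^ (p.2 + 1)) =
        (1 / ((p.1 : ℝ) + 1) * (1 / ((p.2 : ℝ) + 1))) * x ^ (n + 2) := by
      intro p hp
      have hpn : p.1 + p.2 = n := Finset.HasAntidiagonal.mem_antidiagonal.mp hp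
      have e : x ^ (p.1 + 1) * x ^ (p.2 + 1) = x ^ (n + 2) := by
        rw [← pow_add]; congr 1; omega
      rw [mul_mul_mul_comm, e]
    rw [Finset.sum_congr rfl this, ← Finset.sum_mul, sum_antidiagonal_inv]
  rw [tsum_congr inner] at cauchy
  -- cauchy : -log (1-x) * -log (1-x) = ∑' n, 2 * H (n+1) / (n+2) * x^(n+2)
  have hsum : Summable fun n : ℕ => H n / ((n : ℝ) + 1) * x ^ (n + 1) := by
    refine (summable_coeff (fun n => bound_H_div 1 n le_rfl) hx).congr fun n => ?_
    rw [pow_one]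
  have shift := Summable.tsum_eq_zero_add hsum
  rw [H_zero] at shift
  simp only [zero_div, zero_mul] at shift
  rw [shift, zero_add]
  calc ∑' n : ℕ, H (n + 1) / (((n + 1 : ℕ) : ℝ) + 1) * x ^ (n + 1 + 1)
      = ∑' n : ℕ, (2 * H (n + 1) / ((n : ℝ) + 2) * x ^ (n + 2)) / 2 := by
        refine tsum_congr fun n => ?_
        push_cast
        have h2 : ((n : ℝ) + 2) ≠ 0 := by positivity
        rw [show (n : ℝ) + 1 + 1 = (n : ℝ) + 2 by ring, show n + 1 + 1 = n + 2 from rfl]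
        field_simp
    _ = (∑' n : ℕ, 2 * H (n + 1) / ((n : ℝ) + 2) * x ^ (n + 2)) / 2 := by
        rw [tsum_div_const]
    _ = log (1 - x) ^ 2 / 2 := by rw [← cauchy]; ring_nf

lemma hasDerivAt_Li21 {x : ℝ} (hx : |x| < 1) (hx0 : x ≠ 0) :
    HasDerivAt Li21 (log (1 - x) ^ 2 / 2 / x) x := by
  have key := hasDerivAt_tsum_coeff (fun n => bound_H_div 2 n (by norm_num)) hx
  rw [show (fun y => ∑' n : ℕ, H n / ((n : ℝ) + 1) ^ 2 * y ^ (n + 1)) = Li21 from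
    funext fun y => (Li21_eq_tsum y).symm] at key
  have e2 : ∑' n : ℕ, ((n : ℝ) + 1) * (H n / ((n : ℝ) + 1) ^ 2) * x ^ n
      = log (1 - x) ^ 2 / 2 / x := by
    rw [show (fun n : ℕ => ((n : ℝ) + 1) * (H n / ((n : ℝ) + 1) ^ 2) * x ^ n) =
        fun n : ℕ => H n / ((n : ℝ) + 1) * x ^ n from funext fun n => by
      have h1 : ((n : ℝ) + 1) ≠ 0 := by positivity
      field_simp]
    rw [tsum_shift_mul hx0, Li11_eq hx]
  rwa [e2] at key

lemma H_le_sqrt (n : ℕ) : H n ≤ 2 * Real.sqrt (n : ℝ) := by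
  induction n with
  | zero => rw [H_zero]; positivity
  | succ n ih =>
    rw [H_succ]
    have h1 : (0:ℝ) ≤ (n : ℝ) := Nat.cast_nonneg n
    have h2 : (0:ℝ) ≤ (n : ℝ) + 1 := by positivity
    have s1 := Real.sq_sqrt h1
    have s2 := Real.sq_sqrt h2
    have s1' := Real.sqrt_nonneg (n : ℝ)
    have s2' := Real.sqrt_nonneg ((n : ℝ) + 1)
    have m1 : Real.sqrt (n : ℝ) ≤ (n : ℝ) + 1 := by nlinarith
    have m2 : Real.sqrt ((n : ℝ) + 1) ≤ (n : ℝ) + 1 := by nlinarith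
    have key : 1 / ((n : ℝ) + 1) ≤ 2 * (Real.sqrt ((n : ℝ) + 1) - Real.sqrt (n : ℝ)) := by
      rw [div_le_iff₀ (by positivity)]
      nlinarith [sq_nonneg (Real.sqrt ((n:ℝ)+1) - Real.sqrt (n:ℝ))]
    push_cast
    linarith

lemma summable_one_div_sq : Summable fun n : ℕ => 1 / ((n : ℝ) + 1) ^ 2 := by
  have := (Real.summable_one_div_nat_pow (p := 2)).mpr (by norm_num)
  have h := (summable_nat_add_iff 1).mpr this
  exact h.congr fun n => by push_cast; ring

lemma summable_Hdiv2 : Summable fun n : ℕ => H n / ((n : ℝ) + 1) ^ 2 := by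
  have base : Summable fun n : ℕ => (n : ℝ) ^ (-(3/2 : ℝ)) := by
    exact Real.summable_nat_rpow.mpr (by norm_num)
  have base1 : Summable fun n : ℕ => ((n : ℝ) + 1) ^ (-(3/2 : ℝ)) := by
    have h := (summable_nat_add_iff 1).mpr base
    exact h.congr fun n => by push_cast; ring_nf
  refine Summable.of_nonneg_of_le (fun n => div_nonneg (H_nonneg n) (by positivity))
    (fun n => ?_) (base1.mul_left 2)
  have h1 : (0:ℝ) < (n : ℝ) + 1 := by positivity
  calc H n / ((n : ℝ) + 1) ^ 2 ≤ 2 * Real.sqrt ((n : ℝ) + 1) / ((n : ℝ) + 1) ^ 2 := by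
        apply div_le_div_of_nonneg_right _ (by positivity)
        calc H n ≤ 2 * Real.sqrt (n : ℝ) := H_le_sqrt n
          _ ≤ 2 * Real.sqrt ((n : ℝ) + 1) := by
              have := Real.sqrt_le_sqrt (show (n:ℝ) ≤ (n:ℝ) + 1 by linarith)
              linarith
    _ = 2 * (((n : ℝ) + 1) ^ (-(3/2 : ℝ))) := by
        rw [Real.sqrt_eq_rpow]
        rw [show ((n:ℝ)+1) ^ 2 = ((n:ℝ)+1) ^ (2 : ℝ) by rw [← Real.rpow_natCast ((n:ℝ)+1) 2]; norm_num]
        rw [mul_div_assoc, ← Real.rpow_sub h1]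
        norm_num

lemma one_sub_pow_le' {t : ℝ} (h0 : 0 ≤ t) (h1 : t ≤ 1) (m : ℕ) :
    1 - t ^ m ≤ m * (1 - t) := by
  induction m with
  | zero => simp
  | succ m ih =>
    have ht : t ^ m ≤ 1 := pow_le_one₀ h0 h1
    have : 1 - t ^ (m + 1) = (1 - t ^ m) + t ^ m * (1 - t) := by ring
    rw [this]
    push_cast
    nlinarith [pow_nonneg h0 m]

lemma tail_bound {c : ℕ → ℝ} (hc : ∀ n, 0 ≤ c n)
    (hs : Summable fun n : ℕ => ((n : ℝ) + 1) * c n)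
    {t : ℝ} (h0 : 0 ≤ t) (h1 : t ≤ 1) :
    0 ≤ (∑' n : ℕ, c n) - (∑' n : ℕ, c n * t ^ (n + 1)) ∧
    (∑' n : ℕ, c n) - (∑' n : ℕ, c n * t ^ (n + 1)) ≤
      (∑' n : ℕ, ((n : ℝ) + 1) * c n) * (1 - t) := by
  have hc' : Summable c := by
    refine hs.of_nonneg_of_le hc fun n => ?_
    exact le_mul_of_one_le_left (hc n) (by linarith [Nat.cast_nonneg (α := ℝ) n])
  have hct : Summable fun n : ℕ => c n * t ^ (n + 1) := by
    refine hc'.of_nonneg_of_le (fun n => mul_nonneg (hc n) (pow_nonneg h0 _)) fun n => ?_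
    exact mul_le_of_le_one_right (hc n) (pow_le_one₀ h0 h1)
  have hdiff : (∑' n : ℕ, c n) - (∑' n : ℕ, c n * t ^ (n + 1)) =
      ∑' n : ℕ, (c n - c n * t ^ (n + 1)) := (Summable.tsum_sub hc' hct).symm
  constructor
  · rw [hdiff]
    refine tsum_nonneg fun n => ?_
    have : t ^ (n + 1) ≤ 1 := pow_le_one₀ h0 h1
    nlinarith [hc n]
  · rw [hdiff]
    have : (∑' n : ℕ, ((n : ℝ) + 1) * c n) * (1 - t) =
        ∑' n : ℕ, ((n : ℝ) + 1) * c n * (1 - t) := (tsum_mul_right).symm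
    rw [this]
    refine Summable.tsum_le_tsum (fun n => ?_) (hc'.sub hct) (hs.mul_right _)
    have hp := one_sub_pow_le' h0 h1 (n + 1)
    have : c n - c n * t ^ (n + 1) = c n * (1 - t ^ (n + 1)) := by ring
    rw [this]
    calc c n * (1 - t ^ (n + 1)) ≤ c n * ((n + 1 : ℕ) * (1 - t)) := by
          apply mul_le_mul_of_nonneg_left _ (hc n)
          exact hp
      _ = ((n : ℝ) + 1) * c n * (1 - t) := by push_cast; ring
  
lemma tsum_coeff_nonneg_le {c : ℕ → ℝ} (hc : ∀ n, 0 ≤ c n) (hsc : Summable c)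
    {t : ℝ} (h0 : 0 ≤ t) (h1 : t ≤ 1) :
    |∑' n : ℕ, c n * t ^ (n + 1)| ≤ ∑' n : ℕ, c n := by
  have hct : Summable fun n : ℕ => c n * t ^ (n + 1) := by
    refine hsc.of_nonneg_of_le (fun n => mul_nonneg (hc n) (pow_nonneg h0 _)) fun n => ?_
    exact mul_le_of_le_one_right (hc n) (pow_le_one₀ h0 h1)
  rw [abs_of_nonneg (tsum_nonneg fun n => mul_nonneg (hc n) (pow_nonneg h0 _))]
  exact Summable.tsum_le_tsum (fun n => mul_le_of_le_one_right (hc n) (pow_le_one₀ h0 h1)) hct hsc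

lemma abs_tsum_coeff_le {a : ℕ → ℝ} (ha : ∀ n, |a n| ≤ 1) {x : ℝ}
    (h0 : 0 ≤ x) (hx : x < 1) :
    |∑' n : ℕ, a n * x ^ (n + 1)| ≤ x / (1 - x) := by
  have hax : |x| < 1 := by rwa [abs_of_nonneg h0]
  have hgeom : Summable fun n : ℕ => x ^ (n + 1) := by
    have := (summable_geometric_of_lt_one h0 hx).mul_left x
    exact this.congr fun n => by rw [← pow_succ']
  have habs : ∀ n : ℕ, |a n * x ^ (n + 1)| ≤ x ^ (n + 1) := by
    intro n
    rw [abs_mul, abs_pow, abs_of_nonneg h0]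
    exact mul_le_of_le_one_left (by positivity) (ha n)
  calc |∑' n : ℕ, a n * x ^ (n + 1)| ≤ ∑' n : ℕ, x ^ (n + 1) := by
        rw [← Real.norm_eq_abs]
        exact tsum_of_norm_bounded hgeom.hasSum fun n => by
          rw [Real.norm_eq_abs]; exact habs n
    _ = x * (1 - x)⁻¹ := by
        rw [show (fun n : ℕ => x ^ (n + 1)) = fun n : ℕ => x * x ^ n from
          funext fun n => by rw [← pow_succ']]
        rw [tsum_mul_left, tsum_geometric_of_lt_one h0 hx]
    _ = x / (1 - x) := by rw [div_eq_mul_inv]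

lemma neg_log_one_sub_le {x : ℝ} (h0 : 0 ≤ x) (hx : x ≤ 1/2) :
    -log (1 - x) ≤ 2 * x := by
  have h1 : (0:ℝ) < 1 - x := by linarith
  have := Real.log_le_sub_one_of_pos (show (0:ℝ) < (1 - x)⁻¹ by positivity)
  rw [Real.log_inv] at this
  have h2 : (1 - x)⁻¹ - 1 = x / (1 - x) := by field_simp; ring
  rw [h2] at this
  have h3 : x / (1 - x) ≤ 2 * x := by
    rw [div_le_iff₀ h1]
    nlinarith
  linarith

lemma eventually_small : ∀ᶠ x in 𝓝[>] (0:ℝ), x ∈ Ioo (0:ℝ) (1/2) :=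
  Ioo_mem_nhdsGT_of_mem (by norm_num : (0:ℝ) ∈ Ico (0:ℝ) (1/2))

lemma tendsto_id_zero : Tendsto (fun x : ℝ => x) (𝓝[>] (0:ℝ)) (𝓝 0) :=
  tendsto_id.mono_left nhdsWithin_le_nhds

lemma tendsto_xlog : Tendsto (fun x : ℝ => log x * x) (𝓝[>] (0:ℝ)) (𝓝 0) := by
  have := tendsto_log_mul_rpow_nhdsGT_zero (r := 1) one_pos
  refine this.congr' ?_
  filter_upwards [self_mem_nhdsWithin] with y hy
  rw [Real.rpow_one]

lemma eq_const_of_deriv_zero {F : ℝ → ℝ} (h : ∀ x ∈ Ioo (0:ℝ) 1, HasDerivAt F 0 x)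
    {s t : ℝ} (hs : s ∈ Ioo (0:ℝ) 1) (ht : t ∈ Ioo (0:ℝ) 1) (hst : s ≤ t) : F t = F s := by
  have hsub : Icc s t ⊆ Ioo (0:ℝ) 1 := fun y hy =>
    ⟨lt_of_lt_of_le hs.1 hy.1, lt_of_le_of_lt hy.2 ht.2⟩
  have cont : ContinuousOn F (Icc s t) := fun y hy =>
    ((h y (hsub hy)).continuousAt).continuousWithinAt
  have hd : ∀ y ∈ Ico s t, HasDerivWithinAt F 0 (Ici y) y := fun y hy =>
    (h y (hsub ⟨hy.1, hy.2.le⟩)).hasDerivWithinAt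
  exact constant_of_has_deriv_right_zero cont hd t ⟨hst, le_rfl⟩

lemma eq_lim_of_deriv_zero {F : ℝ → ℝ} {c : ℝ} (h : ∀ x ∈ Ioo (0:ℝ) 1, HasDerivAt F 0 x)
    (hlim : Tendsto F (𝓝[>] (0:ℝ)) (𝓝 c)) {x : ℝ} (hx : x ∈ Ioo (0:ℝ) 1) : F x = c := by
  have hconst : ∀ y ∈ Ioo (0:ℝ) 1, F y = F x ∨ F x = F y := by
    intro y hy
    rcases le_total y x with hyx | hxy
    · exact Or.inr (eq_const_of_deriv_zero h hy hx hyx)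
    · exact Or.inl (eq_const_of_deriv_zero h hx hy hxy)
  have hconst' : ∀ y ∈ Ioo (0:ℝ) 1, F y = F x := by
    intro y hy
    rcases hconst y hy with h1 | h1
    · exact h1
    · exact h1.symm
  have h1 : Tendsto F (𝓝[Ioo (0:ℝ) 1] 0) (𝓝 c) :=
    hlim.mono_left (nhdsWithin_mono 0 Ioo_subset_Ioi_self)
  have h2 : Tendsto F (𝓝[Ioo (0:ℝ) 1] 0) (𝓝 (F x)) := by
    refine Tendsto.congr' ?_ tendsto_const_nhds
    filter_upwards [self_mem_nhdsWithin] with y hy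
    exact (hconst' y hy).symm
  have : (𝓝[Ioo (0:ℝ) 1] (0:ℝ)).NeBot := by
    rw [← mem_closure_iff_nhdsWithin_neBot, closure_Ioo (by norm_num : (0:ℝ) ≠ 1)]
    exact ⟨le_rfl, by norm_num⟩
  exact tendsto_nhds_unique h2 h1

lemma squeeze01 {f g : ℝ → ℝ} (hg : Tendsto g (𝓝[>] (0:ℝ)) (𝓝 0))
    (hb : ∀ x ∈ Ioo (0:ℝ) (1/2), |f x| ≤ g x) : Tendsto f (𝓝[>] (0:ℝ)) (𝓝 0) := by
  refine squeeze_zero_norm' ?_ hg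
  filter_upwards [eventually_small] with x hx
  rw [Real.norm_eq_abs]
  exact hb x hx

lemma tendsto_cx (C : ℝ) : Tendsto (fun x : ℝ => C * x) (𝓝[>] (0:ℝ)) (𝓝 0) := by
  have := tendsto_id_zero.const_mul C
  simpa using this

lemma tendsto_cxlog (C : ℝ) : Tendsto (fun x : ℝ => C * |log x * x|) (𝓝[>] (0:ℝ)) (𝓝 0) := by
  have := (tendsto_xlog.abs).const_mul C
  simpa using this

lemma tendsto_cxlogx (C : ℝ) :
    Tendsto (fun x : ℝ => C * |log x * x| * x) (𝓝[>] (0:ℝ)) (𝓝 0) := by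
  have := (tendsto_cxlog C).mul tendsto_id_zero
  simpa using this

lemma abs_Li21_le {x : ℝ} (h0 : 0 ≤ x) (hx : x < 1) : |Li21 x| ≤ x / (1 - x) := by
  rw [Li21_eq_tsum]
  exact abs_tsum_coeff_le (fun n => bound_H_div 2 n (by norm_num)) h0 hx

lemma abs_Li31_le {x : ℝ} (h0 : 0 ≤ x) (hx : x < 1) : |Li31 x| ≤ x / (1 - x) := by
  rw [Li31_eq_tsum]
  exact abs_tsum_coeff_le (fun n => bound_H_div 3 n (by norm_num)) h0 hx

lemma tendsto_Li21_zero : Tendsto Li21 (𝓝[>] (0:ℝ)) (𝓝 0) := by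
  refine squeeze01 (tendsto_cx 2) fun x hx => ?_
  calc |Li21 x| ≤ x / (1 - x) := abs_Li21_le hx.1.le (by linarith [hx.2])
    _ ≤ 2 * x := by
        rw [div_le_iff₀ (by linarith [hx.2] : (0:ℝ) < 1 - x)]
        nlinarith [hx.1.le, hx.2]

lemma tendsto_Li31_zero : Tendsto Li31 (𝓝[>] (0:ℝ)) (𝓝 0) := by
  refine squeeze01 (tendsto_cx 2) fun x hx => ?_
  calc |Li31 x| ≤ x / (1 - x) := abs_Li31_le hx.1.le (by linarith [hx.2])
    _ ≤ 2 * x := by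
        rw [div_le_iff₀ (by linarith [hx.2] : (0:ℝ) < 1 - x)]
        nlinarith [hx.1.le, hx.2]

lemma summable_shift_cube : Summable fun n : ℕ => ((n : ℝ) + 1) * (1 / ((n : ℝ) + 1) ^ 3) := by
  refine summable_one_div_sq.congr fun n => ?_
  have h1 : ((n : ℝ) + 1) ≠ 0 := by positivity
  field_simp

lemma zeta3_sub_Li3_bound {x : ℝ} (h0 : 0 ≤ x) (hx : x ≤ 1) :
    |zeta3 - Li 3 (1 - x)| ≤ (∑' n : ℕ, ((n : ℝ) + 1) * (1 / ((n : ℝ) + 1) ^ 3)) * x := by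
  have hc : ∀ n : ℕ, (0:ℝ) ≤ 1 / ((n : ℝ) + 1) ^ 3 := fun n => by positivity
  have ht0 : (0:ℝ) ≤ 1 - x := by linarith
  have ht1 : 1 - x ≤ 1 := by linarith
  have tb := tail_bound hc summable_shift_cube ht0 ht1
  have e1 : zeta3 = ∑' n : ℕ, 1 / ((n : ℝ) + 1) ^ 3 := rfl
  have e2 : Li 3 (1 - x) = ∑' n : ℕ, 1 / ((n : ℝ) + 1) ^ 3 * (1 - x) ^ (n + 1) := Li_eq_tsum 3 _
  rw [e1, e2]
  rw [abs_of_nonneg tb.1]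
  have := tb.2
  rw [show 1 - (1 - x) = x by ring] at this
  exact this

lemma zeta31_sub_Li31_bound {x : ℝ} (h0 : 0 ≤ x) (hx : x ≤ 1) :
    |zeta31 - Li31 (1 - x)| ≤ (∑' n : ℕ, ((n : ℝ) + 1) * (H n / ((n : ℝ) + 1) ^ 3)) * x := by
  have hc : ∀ n : ℕ, (0:ℝ) ≤ H n / ((n : ℝ) + 1) ^ 3 := fun n =>
    div_nonneg (H_nonneg n) (by positivity)
  have hsum : Summable fun n : ℕ => ((n : ℝ) + 1) * (H n / ((n : ℝ) + 1) ^ 3) := by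
    refine summable_Hdiv2.congr fun n => ?_
    have h1 : ((n : ℝ) + 1) ≠ 0 := by positivity
    field_simp
  have ht0 : (0:ℝ) ≤ 1 - x := by linarith
  have ht1 : 1 - x ≤ 1 := by linarith
  have tb := tail_bound hc hsum ht0 ht1
  have e1 : zeta31 = ∑' n : ℕ, H n / ((n : ℝ) + 1) ^ 3 := rfl
  have e2 : Li31 (1 - x) = ∑' n : ℕ, H n / ((n : ℝ) + 1) ^ 3 * (1 - x) ^ (n + 1) :=
    Li31_eq_tsum _
  rw [e1, e2, abs_of_nonneg tb.1]
  have := tb.2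
  rw [show 1 - (1 - x) = x by ring] at this
  exact this

lemma tendsto_Li3_one : Tendsto (fun x => Li 3 (1 - x)) (𝓝[>] (0:ℝ)) (𝓝 zeta3) := by
  rw [show (𝓝 zeta3) = 𝓝 (zeta3 - 0) by norm_num]
  have : Tendsto (fun x => zeta3 - Li 3 (1 - x)) (𝓝[>] (0:ℝ)) (𝓝 0) := by
    refine squeeze01 (tendsto_cx (∑' n : ℕ, ((n : ℝ) + 1) * (1 / ((n : ℝ) + 1) ^ 3)))
      fun x hx => zeta3_sub_Li3_bound hx.1.le (by linarith [hx.2])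
  have := (tendsto_const_nhds (x := zeta3) (f := 𝓝[>] (0:ℝ))).sub this
  simpa using this

lemma tendsto_Li31_one : Tendsto (fun x => Li31 (1 - x)) (𝓝[>] (0:ℝ)) (𝓝 zeta31) := by
  rw [show (𝓝 zeta31) = 𝓝 (zeta31 - 0) by norm_num]
  have h : Tendsto (fun x => zeta31 - Li31 (1 - x)) (𝓝[>] (0:ℝ)) (𝓝 0) := by
    refine squeeze01 (tendsto_cx (∑' n : ℕ, ((n : ℝ) + 1) * (H n / ((n : ℝ) + 1) ^ 3)))
      fun x hx => zeta31_sub_Li31_bound hx.1.le (by linarith [hx.2])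
  have := (tendsto_const_nhds (x := zeta31) (f := 𝓝[>] (0:ℝ))).sub h
  simpa using this

lemma abs_Li2_le {t : ℝ} (h0 : 0 ≤ t) (h1 : t ≤ 1) :
    |Li 2 t| ≤ ∑' n : ℕ, 1 / ((n : ℝ) + 1) ^ 2 := by
  rw [Li_eq_tsum]
  exact tsum_coeff_nonneg_le (fun n => by positivity) summable_one_div_sq h0 h1

lemma abs_Li21_le' {t : ℝ} (h0 : 0 ≤ t) (h1 : t ≤ 1) :
    |Li21 t| ≤ ∑' n : ℕ, H n / ((n : ℝ) + 1) ^ 2 := by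
  rw [Li21_eq_tsum]
  exact tsum_coeff_nonneg_le (fun n => div_nonneg (H_nonneg n) (by positivity))
    summable_Hdiv2 h0 h1

lemma tendsto_logLi2 : Tendsto (fun x => log (1 - x) * Li 2 (1 - x)) (𝓝[>] (0:ℝ)) (𝓝 0) := by
  refine squeeze01 (tendsto_cx (2 * ∑' n : ℕ, 1 / ((n : ℝ) + 1) ^ 2)) fun x hx => ?_
  have h1 : (0:ℝ) ≤ 1 - x := by linarith [hx.2]
  have h2 : 1 - x ≤ 1 := by linarith [hx.1]
  have hlog : |log (1 - x)| ≤ 2 * x := by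
    rw [abs_of_nonpos (Real.log_nonpos h1 h2)]
    exact neg_log_one_sub_le hx.1.le hx.2.le
  rw [abs_mul]
  calc |log (1 - x)| * |Li 2 (1 - x)| ≤ (2 * x) * (∑' n : ℕ, 1 / ((n : ℝ) + 1) ^ 2) :=
        mul_le_mul hlog (abs_Li2_le h1 h2) (abs_nonneg _) (by linarith [hx.1.le])
    _ = 2 * (∑' n : ℕ, 1 / ((n : ℝ) + 1) ^ 2) * x := by ring

lemma tendsto_logLi21 : Tendsto (fun x => log (1 - x) * Li21 (1 - x)) (𝓝[>] (0:ℝ)) (𝓝 0) := by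
  refine squeeze01 (tendsto_cx (2 * ∑' n : ℕ, H n / ((n : ℝ) + 1) ^ 2)) fun x hx => ?_
  have h1 : (0:ℝ) ≤ 1 - x := by linarith [hx.2]
  have h2 : 1 - x ≤ 1 := by linarith [hx.1]
  have hlog : |log (1 - x)| ≤ 2 * x := by
    rw [abs_of_nonpos (Real.log_nonpos h1 h2)]
    exact neg_log_one_sub_le hx.1.le hx.2.le
  rw [abs_mul]
  calc |log (1 - x)| * |Li21 (1 - x)| ≤ (2 * x) * (∑' n : ℕ, H n / ((n : ℝ) + 1) ^ 2) := by
        apply mul_le_mul hlog (abs_Li21_le' h1 h2) (abs_nonneg _) (by linarith [hx.1.le])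
      _ = 2 * (∑' n : ℕ, H n / ((n : ℝ) + 1) ^ 2) * x := by ring

lemma tendsto_loglogsq : Tendsto (fun x => log x * log (1 - x) ^ 2) (𝓝[>] (0:ℝ)) (𝓝 0) := by
  refine squeeze01 (tendsto_cxlogx 4) fun x hx => ?_
  have h1 : (0:ℝ) ≤ 1 - x := by linarith [hx.2]
  have h2 : 1 - x ≤ 1 := by linarith [hx.1]
  have hlog : |log (1 - x)| ≤ 2 * x := by
    rw [abs_of_nonpos (Real.log_nonpos h1 h2)]
    exact neg_log_one_sub_le hx.1.le hx.2.le
  rw [abs_mul, abs_pow]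
  calc |log x| * |log (1 - x)| ^ 2 ≤ |log x| * ((2 * x) * (2 * x)) := by
        rw [sq]
        exact mul_le_mul_of_nonneg_left
          (mul_le_mul hlog hlog (abs_nonneg _) (by linarith [hx.1.le])) (abs_nonneg _)
    _ = 4 * |log x * x| * x := by
        rw [abs_mul, abs_of_nonneg hx.1.le]
        ring

lemma Li21_reflection {x : ℝ} (h0 : 0 < x) (h1 : x < 1) :
    Li21 x = zeta3 - Li 3 (1 - x) + log (1 - x) * Li 2 (1 - x)
      + 1/2 * (log x * log (1 - x) ^ 2) := by
  set G : ℝ → ℝ := fun y => Li21 y - (zeta3 - Li 3 (1 - y) + log (1 - y) * Li 2 (1 - y)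
      + 1/2 * (log y * log (1 - y) ^ 2)) with hGdef
  have hderiv : ∀ y ∈ Ioo (0:ℝ) 1, HasDerivAt G 0 y := by
    intro y hy
    obtain ⟨hy0, hy1⟩ := hy
    have hv0 : (0:ℝ) < 1 - y := by linarith
    have hay : |y| < 1 := by rw [abs_of_pos hy0]; exact hy1
    have hav : |1 - y| < 1 := by rw [abs_of_pos hv0]; linarith
    have h1y : HasDerivAt (fun z : ℝ => 1 - z) (-1) y := by
      simpa using (hasDerivAt_id y).const_sub 1
    have hLi3 : HasDerivAt (fun z => Li 3 (1 - z)) (Li 2 (1 - y) / (1 - y) * (-1)) y :=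
      (hasDerivAt_Li3 hav hv0.ne').comp y h1y
    have hlog1 : HasDerivAt (fun z => log (1 - z)) ((1 - y)⁻¹ * (-1)) y :=
      (Real.hasDerivAt_log hv0.ne').comp y h1y
    have hLi2 : HasDerivAt (fun z => Li 2 (1 - z)) (-log (1 - (1 - y)) / (1 - y) * (-1)) y :=
      (hasDerivAt_Li2 hav hv0.ne').comp y h1y
    rw [show (1:ℝ) - (1 - y) = y by ring] at hLi2
    have hlogy : HasDerivAt log y⁻¹ y := Real.hasDerivAt_log hy0.ne'
    have hlogsq : HasDerivAt (fun z => log (1 - z) ^ 2)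
        ((2:ℕ) * log (1 - y) ^ 1 * ((1 - y)⁻¹ * (-1))) y := hlog1.pow 2
    have hmul1 := hlog1.mul hLi2
    have hmul2 := hlogy.mul hlogsq
    have hLi21 := hasDerivAt_Li21 hay hy0.ne'
    have inner := ((hLi3.const_sub zeta3).add hmul1).add (hmul2.const_mul (1/2))
    have total := hLi21.sub inner
    refine total.congr_deriv (Eq.symm ?_)
    have hyne : y ≠ 0 := hy0.ne'
    have hvne : (1:ℝ) - y ≠ 0 := hv0.ne'
    field_simp
    ring
  have hlim : Tendsto G (𝓝[>] (0:ℝ)) (𝓝 0) := by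
    have h := tendsto_Li21_zero.sub
      (((tendsto_const_nhds (x := zeta3)).sub tendsto_Li3_one).add tendsto_logLi2 |>.add
        (tendsto_loglogsq.const_mul (1/2)))
    rw [hGdef]
    simpa using h
  have := eq_lim_of_deriv_zero hderiv hlim ⟨h0, h1⟩
  rw [hGdef] at this
  simp only at this
  linarith [this]

lemma tendsto_logbracket :
    Tendsto (fun x => log x * (zeta3 - Li 3 (1 - x) + log (1 - x) * Li 2 (1 - x)))
      (𝓝[>] (0:ℝ)) (𝓝 0) := by
  set S3 : ℝ := ∑' n : ℕ, ((n : ℝ) + 1) * (1 / ((n : ℝ) + 1) ^ 3) with hS3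
  set S2 : ℝ := ∑' n : ℕ, 1 / ((n : ℝ) + 1) ^ 2 with hS2
  refine squeeze01 (tendsto_cxlog (S3 + 2 * S2)) fun x hx => ?_
  have h1 : (0:ℝ) ≤ 1 - x := by linarith [hx.2]
  have h2 : 1 - x ≤ 1 := by linarith [hx.1]
  have hS3nn : 0 ≤ S3 := tsum_nonneg fun n => by positivity
  have hS2nn : 0 ≤ S2 := tsum_nonneg fun n => by positivity
  have hlog : |log (1 - x)| ≤ 2 * x := by
    rw [abs_of_nonpos (Real.log_nonpos h1 h2)]
    exact neg_log_one_sub_le hx.1.le hx.2.le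
  have hB : |zeta3 - Li 3 (1 - x) + log (1 - x) * Li 2 (1 - x)| ≤ (S3 + 2 * S2) * x := by
    calc |zeta3 - Li 3 (1 - x) + log (1 - x) * Li 2 (1 - x)|
        ≤ |zeta3 - Li 3 (1 - x)| + |log (1 - x) * Li 2 (1 - x)| := abs_add_le _ _
      _ ≤ S3 * x + (2 * x) * S2 := by
          refine add_le_add (zeta3_sub_Li3_bound hx.1.le (by linarith [hx.2])) ?_
          rw [abs_mul]
          exact mul_le_mul hlog (abs_Li2_le h1 h2) (abs_nonneg _) (by linarith [hx.1.le])
      _ = (S3 + 2 * S2) * x := by ring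
  rw [abs_mul]
  calc |log x| * |zeta3 - Li 3 (1 - x) + log (1 - x) * Li 2 (1 - x)|
      ≤ |log x| * ((S3 + 2 * S2) * x) :=
        mul_le_mul_of_nonneg_left hB (abs_nonneg _)
    _ = (S3 + 2 * S2) * (|log x| * x) := by ring
    _ = (S3 + 2 * S2) * |log x * x| := by
        rw [abs_mul, abs_of_nonneg hx.1.le]

lemma tendsto_logsq_logsq :
    Tendsto (fun x => 1/4 * log x ^ 2 * log (1 - x) ^ 2) (𝓝[>] (0:ℝ)) (𝓝 0) := by
  have hg : Tendsto (fun x : ℝ => 1 * |log x * x| * |log x * x|) (𝓝[>] (0:ℝ)) (𝓝 0) := by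
    have := (tendsto_cxlog 1).mul tendsto_xlog.abs
    simpa using this
  refine squeeze01 hg fun x hx => ?_
  have h1 : (0:ℝ) ≤ 1 - x := by linarith [hx.2]
  have h2 : 1 - x ≤ 1 := by linarith [hx.1]
  have hlog : |log (1 - x)| ≤ 2 * x := by
    rw [abs_of_nonpos (Real.log_nonpos h1 h2)]
    exact neg_log_one_sub_le hx.1.le hx.2.le
  have e1 : |1/4 * log x ^ 2 * log (1 - x) ^ 2| = 1/4 * (|log x|) ^ 2 * (|log (1 - x)|) ^ 2 := by
    rw [abs_mul, abs_mul, abs_pow, abs_pow]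
    norm_num [abs_of_nonneg, sq_abs]
  rw [e1]
  have hlx : |log x * x| = |log x| * x := by rw [abs_mul, abs_of_nonneg hx.1.le]
  calc 1/4 * |log x| ^ 2 * |log (1 - x)| ^ 2 ≤ 1/4 * |log x| ^ 2 * (2 * x) ^ 2 := by
        apply mul_le_mul_of_nonneg_left _ (by positivity)
        exact pow_le_pow_left₀ (abs_nonneg _) hlog 2
    _ = (|log x| * x) * (|log x| * x) := by ring
    _ = 1 * |log x * x| * |log x * x| := by rw [hlx]; ring

lemma Li31_reflection {x : ℝ} (h0 : 0 < x) (h1 : x < 1) :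
    Li31 x + Li31 (1 - x) =
      log x * (zeta3 - Li 3 (1 - x) + log (1 - x) * Li 2 (1 - x)) +
        zeta31 + log (1 - x) * Li21 (1 - x) + 1/4 * log x ^ 2 * log (1 - x) ^ 2 := by
  set F : ℝ → ℝ := fun y => Li31 y + Li31 (1 - y) -
      (log y * (zeta3 - Li 3 (1 - y) + log (1 - y) * Li 2 (1 - y)) +
        log (1 - y) * Li21 (1 - y) + 1/4 * log y ^ 2 * log (1 - y) ^ 2) with hFdef
  have hderiv : ∀ y ∈ Ioo (0:ℝ) 1, HasDerivAt F 0 y := by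
    intro y hy
    obtain ⟨hy0, hy1⟩ := hy
    have hv0 : (0:ℝ) < 1 - y := by linarith
    have hay : |y| < 1 := by rw [abs_of_pos hy0]; exact hy1
    have hav : |1 - y| < 1 := by rw [abs_of_pos hv0]; linarith
    have h1y : HasDerivAt (fun z : ℝ => 1 - z) (-1) y := by
      simpa using (hasDerivAt_id y).const_sub 1
    have hLi31 := hasDerivAt_Li31 hay hy0.ne'
    have hLi31v : HasDerivAt (fun z => Li31 (1 - z)) (Li21 (1 - y) / (1 - y) * (-1)) y :=
      (hasDerivAt_Li31 hav hv0.ne').comp y h1y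
    have hLi3 : HasDerivAt (fun z => Li 3 (1 - z)) (Li 2 (1 - y) / (1 - y) * (-1)) y :=
      (hasDerivAt_Li3 hav hv0.ne').comp y h1y
    have hlog1 : HasDerivAt (fun z => log (1 - z)) ((1 - y)⁻¹ * (-1)) y :=
      (Real.hasDerivAt_log hv0.ne').comp y h1y
    have hLi2 : HasDerivAt (fun z => Li 2 (1 - z)) (-log (1 - (1 - y)) / (1 - y) * (-1)) y :=
      (hasDerivAt_Li2 hav hv0.ne').comp y h1y
    rw [show (1:ℝ) - (1 - y) = y by ring] at hLi2
    have hLi21v : HasDerivAt (fun z => Li21 (1 - z))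
        (log (1 - (1 - y)) ^ 2 / 2 / (1 - y) * (-1)) y :=
      (hasDerivAt_Li21 hav hv0.ne').comp y h1y
    rw [show (1:ℝ) - (1 - y) = y by ring] at hLi21v
    have hlogy : HasDerivAt log y⁻¹ y := Real.hasDerivAt_log hy0.ne'
    have hlogysq : HasDerivAt (fun z => log z ^ 2) ((2:ℕ) * log y ^ 1 * y⁻¹) y := hlogy.pow 2
    have hlogsq : HasDerivAt (fun z => log (1 - z) ^ 2)
        ((2:ℕ) * log (1 - y) ^ 1 * ((1 - y)⁻¹ * (-1))) y := hlog1.pow 2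
    have hB := (hLi3.const_sub zeta3).add (hlog1.mul hLi2)
    have hT1 := hlogy.mul hB
    have hT2 := hlog1.mul hLi21v
    have hT3 := (hlogysq.const_mul (1/4 : ℝ)).mul hlogsq
    have total := (hLi31.add hLi31v).sub ((hT1.add hT2).add hT3)
    refine total.congr_deriv (Eq.symm ?_)
    have hyne : y ≠ 0 := hy0.ne'
    have hvne : (1:ℝ) - y ≠ 0 := hv0.ne'
    have href := Li21_reflection hy0 hy1
    rw [href]
    simp only [Pi.add_apply, Pi.mul_apply]
    field_simp
    ring
  have hlim : Tendsto F (𝓝[>] (0:ℝ)) (𝓝 zeta31) := by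
    have h := (tendsto_Li31_zero.add tendsto_Li31_one).sub
      ((tendsto_logbracket.add tendsto_logLi21).add tendsto_logsq_logsq)
    rw [hFdef]
    simpa using h
  have hval := eq_lim_of_deriv_zero hderiv hlim ⟨h0, h1⟩
  rw [hFdef] at hval
  simp only at hval
  linarith [hval]

lemma hasSum_zeta2' : HasSum (fun n : ℕ => 1 / ((n : ℝ) + 1) ^ 2) (π ^ 2 / 6) := by
  have h0 : HasSum (fun n : ℕ => 1 / ((n : ℝ) : ℝ) ^ 2) (π ^ 2 / 6) := hasSum_zeta_two
  have h1 : HasSum (fun n : ℕ => 1 / (((n + 1 : ℕ) : ℝ)) ^ 2) (π ^ 2 / 6) := by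
    refine (hasSum_nat_add_iff (f := fun n : ℕ => 1 / ((n : ℝ)) ^ 2) 1).mpr ?_
    simpa using h0
  refine h1.congr_fun fun n => ?_
  push_cast
  ring_nf

lemma hasSum_zeta4' : HasSum (fun n : ℕ => 1 / ((n : ℝ) + 1) ^ 4) (π ^ 4 / 90) := by
  have h0 : HasSum (fun n : ℕ => 1 / ((n : ℝ) : ℝ) ^ 4) (π ^ 4 / 90) := hasSum_zeta_four
  have h1 : HasSum (fun n : ℕ => 1 / (((n + 1 : ℕ) : ℝ)) ^ 4) (π ^ 4 / 90) := by
    refine (hasSum_nat_add_iff (f := fun n : ℕ => 1 / ((n : ℝ)) ^ 4) 1).mpr ?_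
    simpa using h0
  refine h1.congr_fun fun n => ?_
  push_cast
  ring_nf

lemma summable_H2div : Summable fun n : ℕ => H2 n / ((n : ℝ) + 1) ^ 2 := by
  refine Summable.of_nonneg_of_le (fun n => div_nonneg (H2_nonneg n) (by positivity))
    (fun n => ?_) (summable_one_div_sq.mul_left 2)
  have h2 : H2 n ≤ 2 := le_trans (H2_le n) (by
    have : 0 ≤ 2 / ((n:ℝ) + 1) := by positivity
    linarith)
  calc H2 n / ((n : ℝ) + 1) ^ 2 ≤ 2 / ((n : ℝ) + 1) ^ 2 := by gcongr
    _ = 2 * (1 / ((n : ℝ) + 1) ^ 2) := by ring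

lemma summable_Hdiv3 : Summable fun n : ℕ => H n / ((n : ℝ) + 1) ^ 3 := by
  refine Summable.of_nonneg_of_le (fun n => div_nonneg (H_nonneg n) (by positivity))
    (fun n => ?_) summable_Hdiv2
  rw [show ((n:ℝ) + 1) ^ 3 = ((n:ℝ) + 1) ^ 2 * ((n:ℝ) + 1) by ring, ← div_div]
  exact div_le_self (div_nonneg (H_nonneg n) (by positivity))
    (by linarith [Nat.cast_nonneg (α := ℝ) n])

-- square of partial sums identity
lemma partial_sq (N : ℕ) :
    (∑ k ∈ Finset.range N, 1 / ((k : ℝ) + 1) ^ 2) ^ 2 =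
      ∑ k ∈ Finset.range N, 1 / ((k : ℝ) + 1) ^ 4 +
        2 * ∑ k ∈ Finset.range N, H2 k / ((k : ℝ) + 1) ^ 2 := by
  induction N with
  | zero => simp
  | succ N ih =>
    rw [Finset.sum_range_succ, Finset.sum_range_succ, Finset.sum_range_succ]
    have hH2 : H2 N = ∑ k ∈ Finset.range N, 1 / ((k : ℝ) + 1) ^ 2 := rfl
    rw [hH2]
    have h4 : (1 / ((N:ℝ) + 1) ^ 2) ^ 2 = 1 / ((N:ℝ) + 1) ^ 4 := by
      rw [div_pow, one_pow, ← pow_mul]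
    linear_combination ih + h4

lemma stuffle : (π ^ 2 / 6) ^ 2 = π ^ 4 / 90 + 2 * ∑' n : ℕ, H2 n / ((n : ℝ) + 1) ^ 2 := by
  have l1 : Tendsto (fun N => (∑ k ∈ Finset.range N, 1 / ((k : ℝ) + 1) ^ 2) ^ 2)
      atTop (𝓝 ((π ^ 2 / 6) ^ 2)) := (hasSum_zeta2'.tendsto_sum_nat).pow 2
  have l2 := hasSum_zeta4'.tendsto_sum_nat
  have l3 := summable_H2div.hasSum.tendsto_sum_nat
  have lcomb := l2.add (l3.const_mul 2)
  have heq : (fun N => (∑ k ∈ Finset.range N, 1 / ((k : ℝ) + 1) ^ 2) ^ 2) =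
      fun N => ∑ k ∈ Finset.range N, 1 / ((k : ℝ) + 1) ^ 4 +
        2 * ∑ k ∈ Finset.range N, H2 k / ((k : ℝ) + 1) ^ 2 := funext partial_sq
  rw [heq] at l1
  exact tendsto_nhds_unique l1 lcomb

lemma H2_shift_tsum :
    ∑' n : ℕ, H2 n / ((n : ℝ) + 1) ^ 2 = ∑' n : ℕ, H2 (n + 1) / ((n : ℝ) + 2) ^ 2 := by
  rw [Summable.tsum_eq_zero_add summable_H2div]
  have h0 : H2 0 = 0 := by simp [H2]
  rw [h0]
  simp only [zero_div]
  rw [zero_add]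
  exact tsum_congr fun n => by push_cast; ring_nf

lemma zeta31_shift_tsum : zeta31 = ∑' n : ℕ, H (n + 1) / ((n : ℝ) + 2) ^ 3 := by
  have e : zeta31 = ∑' n : ℕ, H n / ((n : ℝ) + 1) ^ 3 := rfl
  rw [e, Summable.tsum_eq_zero_add summable_Hdiv3, H_zero]
  simp only [zero_div]
  rw [zero_add]
  exact tsum_congr fun n => by push_cast; ring_nf

lemma summable_H2shift : Summable fun n : ℕ => H2 (n + 1) / ((n : ℝ) + 2) ^ 2 := by
  have := (summable_nat_add_iff 1).mpr summable_H2div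
  exact this.congr fun n => by push_cast; ring_nf

lemma summable_Hshift : Summable fun n : ℕ => H (n + 1) / ((n : ℝ) + 2) ^ 3 := by
  have := (summable_nat_add_iff 1).mpr summable_Hdiv3
  exact this.congr fun n => by push_cast; ring_nf

lemma shuffle : (π ^ 2 / 6) ^ 2 = 2 * (∑' n : ℕ, H2 n / ((n : ℝ) + 1) ^ 2) + 4 * zeta31 := by
  have hf : Summable fun n : ℕ => ‖1 / ((n : ℝ) + 1) ^ 2‖ :=
    summable_one_div_sq.congr fun n => by
      rw [Real.norm_eq_abs, abs_of_nonneg (by positivity)]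
  have cauchy := tsum_mul_tsum_eq_tsum_sum_antidiagonal_of_summable_norm hf hf
  have hL : (∑' n : ℕ, 1 / ((n : ℝ) + 1) ^ 2) = π ^ 2 / 6 := hasSum_zeta2'.tsum_eq
  rw [hL] at cauchy
  have inner : ∀ n : ℕ, ∑ p ∈ Finset.HasAntidiagonal.antidiagonal n,
      1 / ((p.1 : ℝ) + 1) ^ 2 * (1 / ((p.2 : ℝ) + 1) ^ 2) =
      2 * (H2 (n + 1) / ((n : ℝ) + 2) ^ 2) + 4 * (H (n + 1) / ((n : ℝ) + 2) ^ 3) := by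
    intro n
    rw [sum_antidiagonal_inv_sq n]
    ring
  rw [tsum_congr inner] at cauchy
  rw [Summable.tsum_add ((summable_H2shift).mul_left 2) ((summable_Hshift).mul_left 4),
    tsum_mul_left, tsum_mul_left] at cauchy
  rw [← H2_shift_tsum, ← zeta31_shift_tsum] at cauchy
  calc (π ^ 2 / 6) ^ 2 = π ^ 2 / 6 * (π ^ 2 / 6) := sq _
    _ = 2 * (∑' n : ℕ, H2 n / ((n : ℝ) + 1) ^ 2) + 4 * zeta31 := cauchy

lemma zeta31_value : zeta31 = π ^ 4 / 360 := by
  have h1 := stuffle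
  have h2 := shuffle
  linarith

theorem stmt14 (x : ℝ) (hx0 : 0 < x) (hx1 : x < 1) :
    (Li31 x + Li31 (1 - x) =
      Real.log x * (zeta3 - Li 3 (1 - x) + Real.log (1 - x) * Li 2 (1 - x)) +
        zeta31 + Real.log (1 - x) * Li21 (1 - x) +
        1 / 4 * Real.log x ^ 2 * Real.log (1 - x) ^ 2) ∧ zeta31 = π ^ 4 / 360 :=
  ⟨Li31_reflection hx0 hx1, zeta31_value⟩
end
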